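/- Let D₆ denote the lattice of vectors (x₁,…,x₆,−x₆,…,−x₁) ∈ ℤ¹² with Σxᵢ even, and let the Weyl group W(D₆) = {±1}⁵ ⋊ S₆ act by permuting coordinates x₁,…,x₆ and changing an even number of signs. Relabel the coordinates as y₁⁺,y₁⁻,y₂⁺,y₂⁻,y₃⁺,y₃⁻. Define for i=1,2,3 elements: rᵢ swaps y_j⁺ with y_k⁺ and negates y_j⁻, y_k⁻ (where {i,j,k}={1,2,3}); hᵢ negates y_j⁻ and y_k⁻; vᵢ swaps (y_j⁺,y_j⁻) with (y_k⁺,y_k⁻). Then the group generated by the hᵢrᵢ and the vᵢrᵢ is isomorphic to S₃ × S₄, with the S₃ generated by {hᵢrᵢ} and the commuting S₄ generated by {vᵢrᵢ}. -/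
import Mathlib


/-!
**Statement 3.**  Coordinates on the `D₆`-lattice are relabeled
`(y₁⁺, y₁⁻, y₂⁺, y₂⁻, y₃⁺, y₃⁻)`, indexed below by `0,…,5`.  For `i = 1,2,3` (with
`{i,j,k} = {1,2,3}`): `rᵢ` swaps `y_j⁺ ↔ y_k⁺` and negates `y_j⁻, y_k⁻`; `hᵢ` negates
`y_j⁻, y_k⁻`; `vᵢ` swaps `(y_j⁺, y_j⁻) ↔ (y_k⁺, y_k⁻)`.  The group generated by the
`hᵢrᵢ` and the `vᵢrᵢ` is isomorphic to `S₃ × S₄`, with the `S₃` generated by `{hᵢrᵢ}`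
and the commuting `S₄` generated by `{vᵢrᵢ}`.
-/

namespace Stmt3

abbrev GL6 := Matrix.GeneralLinearGroup (Fin 6) ℤ

def mkInvol (A : Matrix (Fin 6) (Fin 6) ℤ) (h : A * A = 1) : GL6 := ⟨A, A, h, h⟩

def R1mat : Matrix (Fin 6) (Fin 6) ℤ :=
  !![1,0,0,0,0,0; 0,1,0,0,0,0; 0,0,0,0,1,0; 0,0,0,-1,0,0; 0,0,1,0,0,0; 0,0,0,0,0,-1]
def R2mat : Matrix (Fin 6) (Fin 6) ℤ :=
  !![0,0,0,0,1,0; 0,-1,0,0,0,0; 0,0,1,0,0,0; 0,0,0,1,0,0; 1,0,0,0,0,0; 0,0,0,0,0,-1]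
def R3mat : Matrix (Fin 6) (Fin 6) ℤ :=
  !![0,0,1,0,0,0; 0,-1,0,0,0,0; 1,0,0,0,0,0; 0,0,0,-1,0,0; 0,0,0,0,1,0; 0,0,0,0,0,1]
def H1mat : Matrix (Fin 6) (Fin 6) ℤ :=
  !![1,0,0,0,0,0; 0,1,0,0,0,0; 0,0,1,0,0,0; 0,0,0,-1,0,0; 0,0,0,0,1,0; 0,0,0,0,0,-1]
def H2mat : Matrix (Fin 6) (Fin 6) ℤ :=
  !![1,0,0,0,0,0; 0,-1,0,0,0,0; 0,0,1,0,0,0; 0,0,0,1,0,0; 0,0,0,0,1,0; 0,0,0,0,0,-1]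
def H3mat : Matrix (Fin 6) (Fin 6) ℤ :=
  !![1,0,0,0,0,0; 0,-1,0,0,0,0; 0,0,1,0,0,0; 0,0,0,-1,0,0; 0,0,0,0,1,0; 0,0,0,0,0,1]
def V1mat : Matrix (Fin 6) (Fin 6) ℤ :=
  !![1,0,0,0,0,0; 0,1,0,0,0,0; 0,0,0,0,1,0; 0,0,0,0,0,1; 0,0,1,0,0,0; 0,0,0,1,0,0]
def V2mat : Matrix (Fin 6) (Fin 6) ℤ :=
  !![0,0,0,0,1,0; 0,0,0,0,0,1; 0,0,1,0,0,0; 0,0,0,1,0,0; 1,0,0,0,0,0; 0,1,0,0,0,0]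
def V3mat : Matrix (Fin 6) (Fin 6) ℤ :=
  !![0,0,1,0,0,0; 0,0,0,1,0,0; 1,0,0,0,0,0; 0,1,0,0,0,0; 0,0,0,0,1,0; 0,0,0,0,0,1]

def r1 : GL6 := mkInvol R1mat (by decide)
def r2 : GL6 := mkInvol R2mat (by decide)
def r3 : GL6 := mkInvol R3mat (by decide)
def h1 : GL6 := mkInvol H1mat (by decide)
def h2 : GL6 := mkInvol H2mat (by decide)
def h3 : GL6 := mkInvol H3mat (by decide)
def v1 : GL6 := mkInvol V1mat (by decide)
def v2 : GL6 := mkInvol V2mat (by decide)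
def v3 : GL6 := mkInvol V3mat (by decide)

open Equiv Matrix

def dv : Matrix (Fin 4) (Fin 3) ℤ := !![1,1,1; 1,-1,-1; -1,1,-1; -1,-1,1]

def psi3 (σ : Equiv.Perm (Fin 4)) : Matrix (Fin 3) (Fin 3) ℤ :=
  Matrix.of fun i j => (∑ a : Fin 4, dv (σ a) i * dv a j) / 4

def P3 (σ : Equiv.Perm (Fin 3)) : Matrix (Fin 3) (Fin 3) ℤ :=
  Matrix.of fun i j => if σ j = i then 1 else 0

set_option maxHeartbeats 4000000 in
theorem psi3_mul : ∀ σ τ : Equiv.Perm (Fin 4), psi3 σ * psi3 τ = psi3 (σ * τ) := by decide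

theorem psi3_one : psi3 1 = 1 := by decide

theorem psi3_eq_one : ∀ σ : Equiv.Perm (Fin 4), psi3 σ = 1 → σ = 1 := by decide

set_option maxHeartbeats 1000000 in
theorem P3_mul : ∀ σ τ : Equiv.Perm (Fin 3), P3 σ * P3 τ = P3 (σ * τ) := by decide

theorem P3_one : P3 1 = 1 := by decide

theorem P3_eq_one : ∀ σ : Equiv.Perm (Fin 3), P3 σ = 1 → σ = 1 := by decide

def eIdx : Fin 6 ≃ Fin 3 ⊕ Fin 3 where
  toFun i := if _ : i.val % 2 = 0 then Sum.inl ⟨i.val / 2, by omega⟩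
             else Sum.inr ⟨i.val / 2, by omega⟩
  invFun := Sum.elim (fun k => ⟨2 * k.val, by omega⟩) (fun k => ⟨2 * k.val + 1, by omega⟩)
  left_inv i := by fin_cases i <;> rfl
  right_inv x := by rcases x with k | k <;> fin_cases k <;> rfl

def comb (A B : Matrix (Fin 3) (Fin 3) ℤ) : Matrix (Fin 6) (Fin 6) ℤ :=
  (Matrix.fromBlocks A 0 0 B).submatrix eIdx eIdx

theorem comb_mul (A B C D : Matrix (Fin 3) (Fin 3) ℤ) :
    comb A B * comb C D = comb (A * C) (B * D) := by
  unfold comb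
  rw [Matrix.submatrix_mul_equiv, Matrix.fromBlocks_multiply]
  simp

theorem comb_one : comb 1 1 = 1 := by
  unfold comb; rw [Matrix.fromBlocks_one, Matrix.submatrix_one_equiv]

theorem comb_eq_one {A B : Matrix (Fin 3) (Fin 3) ℤ} (h : comb A B = 1) :
    A = 1 ∧ B = 1 := by
  have h2 : Matrix.fromBlocks A 0 0 (B : Matrix (Fin 3) (Fin 3) ℤ)
      = Matrix.fromBlocks 1 0 0 1 := by
    have h3 := congrArg (fun M : Matrix (Fin 6) (Fin 6) ℤ =>
      M.submatrix eIdx.symm eIdx.symm) h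
    simp only [comb, Matrix.submatrix_submatrix, Equiv.self_comp_symm,
      Matrix.submatrix_id_id, Matrix.submatrix_one_equiv] at h3
    rw [h3, Matrix.fromBlocks_one]
  rw [Matrix.fromBlocks_inj] at h2
  exact ⟨h2.1, h2.2.2.2⟩


def phi : Equiv.Perm (Fin 3) →* GL6 where
  toFun σ := ⟨comb (P3 σ) 1, comb (P3 σ⁻¹) 1,
    by rw [comb_mul, P3_mul, one_mul]; simp [P3_one, comb_one],
    by rw [comb_mul, P3_mul, one_mul]; simp [P3_one, comb_one]⟩
  map_one' := Units.ext (by simp [P3_one, comb_one])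
  map_mul' σ τ := Units.ext (by rw [Units.val_mul]
                                show comb (P3 (σ * τ)) 1 = comb (P3 σ) 1 * comb (P3 τ) 1
                                rw [comb_mul, P3_mul, one_mul])

def psi : Equiv.Perm (Fin 4) →* GL6 where
  toFun τ := ⟨comb 1 (psi3 τ), comb 1 (psi3 τ⁻¹),
    by rw [comb_mul, psi3_mul, one_mul]; simp [psi3_one, comb_one],
    by rw [comb_mul, psi3_mul, one_mul]; simp [psi3_one, comb_one]⟩
  map_one' := Units.ext (by simp [psi3_one, comb_one])
  map_mul' σ τ := Units.ext (by rw [Units.val_mul]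
                                show comb 1 (psi3 (σ * τ)) = comb 1 (psi3 σ) * comb 1 (psi3 τ)
                                rw [comb_mul, psi3_mul, one_mul])

theorem phi_psi_comm (σ : Equiv.Perm (Fin 3)) (τ : Equiv.Perm (Fin 4)) :
    Commute (phi σ) (psi τ) := by
  apply Units.ext
  rw [Units.val_mul, Units.val_mul]
  show comb (P3 σ) 1 * comb 1 (psi3 τ) = comb 1 (psi3 τ) * comb (P3 σ) 1
  rw [comb_mul, comb_mul, one_mul, mul_one, one_mul, mul_one]

theorem phi_inj : Function.Injective phi :=
  (injective_iff_map_eq_one phi).mpr fun σ h =>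
    P3_eq_one σ (comb_eq_one (show comb (P3 σ) 1 = 1 from congrArg Units.val h)).1

theorem psi_inj : Function.Injective psi :=
  (injective_iff_map_eq_one psi).mpr fun τ h =>
    psi3_eq_one τ (comb_eq_one (show comb 1 (psi3 τ) = 1 from congrArg Units.val h)).2

def Phi : Equiv.Perm (Fin 3) × Equiv.Perm (Fin 4) →* GL6 :=
  phi.noncommCoprod psi phi_psi_comm

theorem Phi_apply (p : Equiv.Perm (Fin 3) × Equiv.Perm (Fin 4)) :
    Phi p = phi p.1 * psi p.2 := rfl

theorem Phi_inj : Function.Injective Phi := by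
  rw [injective_iff_map_eq_one]
  rintro ⟨σ, τ⟩ h
  have hval : comb (P3 σ) (psi3 τ) = 1 := by
    have h2 : comb (P3 σ) 1 * comb 1 (psi3 τ) = 1 := congrArg Units.val h
    rwa [comb_mul, one_mul, mul_one] at h2
  obtain ⟨hA, hB⟩ := comb_eq_one hval
  have : σ = 1 := P3_eq_one σ hA
  have : τ = 1 := psi3_eq_one τ hB
  simp_all [Prod.ext_iff]

theorem e1 : phi (Equiv.swap 1 2) = h1 * r1 := Units.ext (by decide)
theorem e2 : phi (Equiv.swap 0 2) = h2 * r2 := Units.ext (by decide)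
theorem e3 : phi (Equiv.swap 0 1) = h3 * r3 := Units.ext (by decide)
theorem f1 : psi (Equiv.swap 0 1) = v1 * r1 := Units.ext (by decide)
theorem f2 : psi (Equiv.swap 0 2) = v2 * r2 := Units.ext (by decide)
theorem f3 : psi (Equiv.swap 0 3) = v3 * r3 := Units.ext (by decide)

theorem closureT3 :
    Subgroup.closure ({Equiv.swap 1 2, Equiv.swap 0 2, Equiv.swap 0 1} :
      Set (Equiv.Perm (Fin 3))) = ⊤ := by
  rw [eq_top_iff, ← Equiv.Perm.closure_isSwap, Subgroup.closure_le]
  have m12 : Equiv.swap (1 : Fin 3) 2 ∈ Subgroup.closure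
      ({Equiv.swap 1 2, Equiv.swap 0 2, Equiv.swap 0 1} : Set (Equiv.Perm (Fin 3))) :=
    Subgroup.subset_closure (Set.mem_insert _ _)
  have m02 : Equiv.swap (0 : Fin 3) 2 ∈ Subgroup.closure
      ({Equiv.swap 1 2, Equiv.swap 0 2, Equiv.swap 0 1} : Set (Equiv.Perm (Fin 3))) :=
    Subgroup.subset_closure (Set.mem_insert_of_mem _ (Set.mem_insert _ _))
  have m01 : Equiv.swap (0 : Fin 3) 1 ∈ Subgroup.closure
      ({Equiv.swap 1 2, Equiv.swap 0 2, Equiv.swap 0 1} : Set (Equiv.Perm (Fin 3))) :=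
    Subgroup.subset_closure (Set.mem_insert_of_mem _ (Set.mem_insert_of_mem _ rfl))
  rintro σ ⟨x, y, hxy, rfl⟩
  have h6 : ∀ a b : Fin 3, a ≠ b → a = 0 ∧ b = 1 ∨ a = 0 ∧ b = 2 ∨ a = 1 ∧ b = 0 ∨
      a = 1 ∧ b = 2 ∨ a = 2 ∧ b = 0 ∨ a = 2 ∧ b = 1 := by decide
  rcases h6 x y hxy with ⟨rfl, rfl⟩ | ⟨rfl, rfl⟩ | ⟨rfl, rfl⟩ | ⟨rfl, rfl⟩ |
    ⟨rfl, rfl⟩ | ⟨rfl, rfl⟩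
  · exact m01
  · exact m02
  · rw [Equiv.swap_comm 1 0]; exact m01
  · exact m12
  · rw [Equiv.swap_comm 2 0]; exact m02
  · rw [Equiv.swap_comm 2 1]; exact m12

theorem closureT4 :
    Subgroup.closure ({Equiv.swap 0 1, Equiv.swap 0 2, Equiv.swap 0 3} :
      Set (Equiv.Perm (Fin 4))) = ⊤ := by
  rw [eq_top_iff, ← Equiv.Perm.closure_isSwap, Subgroup.closure_le]
  have m01 : Equiv.swap (0 : Fin 4) 1 ∈ Subgroup.closure
      ({Equiv.swap 0 1, Equiv.swap 0 2, Equiv.swap 0 3} : Set (Equiv.Perm (Fin 4))) :=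
    Subgroup.subset_closure (Set.mem_insert _ _)
  have m02 : Equiv.swap (0 : Fin 4) 2 ∈ Subgroup.closure
      ({Equiv.swap 0 1, Equiv.swap 0 2, Equiv.swap 0 3} : Set (Equiv.Perm (Fin 4))) :=
    Subgroup.subset_closure (Set.mem_insert_of_mem _ (Set.mem_insert _ _))
  have m03 : Equiv.swap (0 : Fin 4) 3 ∈ Subgroup.closure
      ({Equiv.swap 0 1, Equiv.swap 0 2, Equiv.swap 0 3} : Set (Equiv.Perm (Fin 4))) :=
    Subgroup.subset_closure (Set.mem_insert_of_mem _ (Set.mem_insert_of_mem _ rfl))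
  have m12 : Equiv.swap (1 : Fin 4) 2 ∈ Subgroup.closure
      ({Equiv.swap 0 1, Equiv.swap 0 2, Equiv.swap 0 3} : Set (Equiv.Perm (Fin 4))) := by
    rw [show Equiv.swap (1 : Fin 4) 2
      = Equiv.swap 0 1 * Equiv.swap 0 2 * Equiv.swap 0 1 by decide]
    exact mul_mem (mul_mem m01 m02) m01
  have m13 : Equiv.swap (1 : Fin 4) 3 ∈ Subgroup.closure
      ({Equiv.swap 0 1, Equiv.swap 0 2, Equiv.swap 0 3} : Set (Equiv.Perm (Fin 4))) := by
    rw [show Equiv.swap (1 : Fin 4) 3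
      = Equiv.swap 0 1 * Equiv.swap 0 3 * Equiv.swap 0 1 by decide]
    exact mul_mem (mul_mem m01 m03) m01
  have m23 : Equiv.swap (2 : Fin 4) 3 ∈ Subgroup.closure
      ({Equiv.swap 0 1, Equiv.swap 0 2, Equiv.swap 0 3} : Set (Equiv.Perm (Fin 4))) := by
    rw [show Equiv.swap (2 : Fin 4) 3
      = Equiv.swap 0 2 * Equiv.swap 0 3 * Equiv.swap 0 2 by decide]
    exact mul_mem (mul_mem m02 m03) m02
  rintro σ ⟨x, y, hxy, rfl⟩
  have h12 : ∀ a b : Fin 4, a ≠ b →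
      a = 0 ∧ b = 1 ∨ a = 0 ∧ b = 2 ∨ a = 0 ∧ b = 3 ∨
      a = 1 ∧ b = 0 ∨ a = 1 ∧ b = 2 ∨ a = 1 ∧ b = 3 ∨
      a = 2 ∧ b = 0 ∨ a = 2 ∧ b = 1 ∨ a = 2 ∧ b = 3 ∨
      a = 3 ∧ b = 0 ∨ a = 3 ∧ b = 1 ∨ a = 3 ∧ b = 2 := by decide
  rcases h12 x y hxy with ⟨rfl, rfl⟩ | ⟨rfl, rfl⟩ | ⟨rfl, rfl⟩ | ⟨rfl, rfl⟩ | ⟨rfl, rfl⟩ |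
    ⟨rfl, rfl⟩ | ⟨rfl, rfl⟩ | ⟨rfl, rfl⟩ | ⟨rfl, rfl⟩ | ⟨rfl, rfl⟩ | ⟨rfl, rfl⟩ | ⟨rfl, rfl⟩
  · exact m01
  · exact m02
  · exact m03
  · rw [Equiv.swap_comm 1 0]; exact m01
  · exact m12
  · exact m13
  · rw [Equiv.swap_comm 2 0]; exact m02
  · rw [Equiv.swap_comm 2 1]; exact m12
  · exact m23
  · rw [Equiv.swap_comm 3 0]; exact m03
  · rw [Equiv.swap_comm 3 1]; exact m13
  · rw [Equiv.swap_comm 3 2]; exact m23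

theorem phi_range :
    phi.range = Subgroup.closure ({h1 * r1, h2 * r2, h3 * r3} : Set GL6) := by
  rw [MonoidHom.range_eq_map, ← closureT3, MonoidHom.map_closure]
  congr 1
  rw [Set.image_insert_eq, Set.image_insert_eq, Set.image_singleton, e1, e2, e3]

theorem psi_range :
    psi.range = Subgroup.closure ({v1 * r1, v2 * r2, v3 * r3} : Set GL6) := by
  rw [MonoidHom.range_eq_map, ← closureT4, MonoidHom.map_closure]
  congr 1
  rw [Set.image_insert_eq, Set.image_insert_eq, Set.image_singleton, f1, f2, f3]

theorem Phi_range :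
    Phi.range = Subgroup.closure
      ({h1 * r1, h2 * r2, h3 * r3, v1 * r1, v2 * r2, v3 * r3} : Set GL6) := by
  apply le_antisymm
  · rintro x ⟨⟨σ, τ⟩, rfl⟩
    rw [Phi_apply]
    have hH : ({h1 * r1, h2 * r2, h3 * r3} : Set GL6)
        ⊆ ({h1 * r1, h2 * r2, h3 * r3, v1 * r1, v2 * r2, v3 * r3} : Set GL6) := by
      intro z hz
      simp only [Set.mem_insert_iff, Set.mem_singleton_iff] at hz ⊢
      tauto
    have hV : ({v1 * r1, v2 * r2, v3 * r3} : Set GL6)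
        ⊆ ({h1 * r1, h2 * r2, h3 * r3, v1 * r1, v2 * r2, v3 * r3} : Set GL6) := by
      intro z hz
      simp only [Set.mem_insert_iff, Set.mem_singleton_iff] at hz ⊢
      tauto
    have hσ : phi σ ∈ Subgroup.closure
        ({h1 * r1, h2 * r2, h3 * r3, v1 * r1, v2 * r2, v3 * r3} : Set GL6) :=
      Subgroup.closure_mono hH (phi_range ▸ MonoidHom.mem_range.mpr ⟨σ, rfl⟩)
    have hτ : psi τ ∈ Subgroup.closure
        ({h1 * r1, h2 * r2, h3 * r3, v1 * r1, v2 * r2, v3 * r3} : Set GL6) :=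
      Subgroup.closure_mono hV (psi_range ▸ MonoidHom.mem_range.mpr ⟨τ, rfl⟩)
    exact mul_mem hσ hτ
  · rw [Subgroup.closure_le]
    intro x hx
    simp only [Set.mem_insert_iff, Set.mem_singleton_iff] at hx
    rcases hx with rfl | rfl | rfl | rfl | rfl | rfl
    · exact ⟨(Equiv.swap 1 2, 1), by rw [Phi_apply]; show phi (Equiv.swap 1 2) * psi 1 = _; rw [_root_.map_one, mul_one, e1]⟩
    · exact ⟨(Equiv.swap 0 2, 1), by rw [Phi_apply]; show phi (Equiv.swap 0 2) * psi 1 = _; rw [_root_.map_one, mul_one, e2]⟩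
    · exact ⟨(Equiv.swap 0 1, 1), by rw [Phi_apply]; show phi (Equiv.swap 0 1) * psi 1 = _; rw [_root_.map_one, mul_one, e3]⟩
    · exact ⟨(1, Equiv.swap 0 1), by rw [Phi_apply]; show phi 1 * psi (Equiv.swap 0 1) = _; rw [_root_.map_one, one_mul, f1]⟩
    · exact ⟨(1, Equiv.swap 0 2), by rw [Phi_apply]; show phi 1 * psi (Equiv.swap 0 2) = _; rw [_root_.map_one, one_mul, f2]⟩
    · exact ⟨(1, Equiv.swap 0 3), by rw [Phi_apply]; show phi 1 * psi (Equiv.swap 0 3) = _; rw [_root_.map_one, one_mul, f3]⟩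


theorem stmt_3 :
    (∀ a ∈ Subgroup.closure ({h1 * r1, h2 * r2, h3 * r3} : Set GL6),
      ∀ b ∈ Subgroup.closure ({v1 * r1, v2 * r2, v3 * r3} : Set GL6), a * b = b * a) ∧
    Nonempty ((Subgroup.closure ({h1 * r1, h2 * r2, h3 * r3} : Set GL6))
      ≃* Equiv.Perm (Fin 3)) ∧
    Nonempty ((Subgroup.closure ({v1 * r1, v2 * r2, v3 * r3} : Set GL6))
      ≃* Equiv.Perm (Fin 4)) ∧
    Nonempty ((Subgroup.closure
        ({h1 * r1, h2 * r2, h3 * r3, v1 * r1, v2 * r2, v3 * r3} : Set GL6))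
      ≃* Equiv.Perm (Fin 3) × Equiv.Perm (Fin 4)) := by
  refine ⟨?_,
    ⟨(MulEquiv.subgroupCongr phi_range.symm).trans (MonoidHom.ofInjective phi_inj).symm⟩,
    ⟨(MulEquiv.subgroupCongr psi_range.symm).trans (MonoidHom.ofInjective psi_inj).symm⟩,
    ⟨(MulEquiv.subgroupCongr Phi_range.symm).trans (MonoidHom.ofInjective Phi_inj).symm⟩⟩
  intro a ha b hb
  rw [← phi_range] at ha
  rw [← psi_range] at hb
  obtain ⟨σ, rfl⟩ := ha
  obtain ⟨τ, rfl⟩ := hb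
  exact (phi_psi_comm σ τ).eq


end Stmt3
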